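/- Fix s₀, θ₀ ∈ ℝ and assume Q(s₀,u) ≠ ∅ for every u ∈ M. Then the event {Q⁺_{s₀}(U*) ≤ θ₀} is measurable (it equals the countable intersection over ε = 1/n of the events {G_S(U*, θ₀+ε) > s₀}), the one-sided limit lim_{ε↓0} F_S(s₀, θ₀+ε) exists (F_S(s₀,·) is nonincreasing), and P(Q⁺_{s₀}(U*) ≤ θ₀) = 1 − lim_{ε↓0} F_S(s₀, θ₀+ε). -/

import Mathlib

open MeasureTheory Filter Set Topology

/-- For a nondecreasing data generating equation with nonempty inverse images,
the event `{Q⁺_{s₀}(U*) ≤ θ₀}` is measurable (it equals the countable intersection over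
`ε = 1/n` of the events `{G_S(U*, θ₀+ε) > s₀}`), the one-sided limit
`lim_{ε↓0} F_S(s₀, θ₀+ε)` exists (`F_S(s₀,·)` being nonincreasing), and
`P(Q⁺_{s₀}(U*) ≤ θ₀) = 1 − lim_{ε↓0} F_S(s₀, θ₀+ε)`. -/
theorem fiducial_sup_inverse_image_prob
    {M Ω : Type*} [MeasurableSpace M] [MeasurableSpace Ω]
    (P : Measure Ω) [IsProbabilityMeasure P]
    (U Ustar : Ω → M) (hU : Measurable U) (hUstar : Measurable Ustar)
    (hdist : Measure.map Ustar P = Measure.map U P)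
    (GS : M → ℝ → ℝ) (hGS : Measurable (Function.uncurry GS))
    (hmono : ∀ u : M, Monotone (GS u))
    (s₀ θ₀ : ℝ)
    (hne : ∀ u : M, {θ : ℝ | GS u θ = s₀}.Nonempty) :
    MeasurableSet {ω : Ω | sSup (Real.toEReal '' {θ : ℝ | GS (Ustar ω) θ = s₀}) ≤ (θ₀ : EReal)} ∧
    ({ω : Ω | sSup (Real.toEReal '' {θ : ℝ | GS (Ustar ω) θ = s₀}) ≤ (θ₀ : EReal)} =
      ⋂ n : ℕ, {ω : Ω | s₀ < GS (Ustar ω) (θ₀ + 1 / ((n : ℝ) + 1))}) ∧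
    Antitone (fun θ : ℝ => (P {ω : Ω | GS (U ω) θ ≤ s₀}).toReal) ∧
    ∃ L : ℝ,
      Tendsto (fun ε : ℝ => (P {ω : Ω | GS (U ω) (θ₀ + ε) ≤ s₀}).toReal) (𝓝[>] 0) (𝓝 L) ∧
      (P {ω : Ω | sSup (Real.toEReal '' {θ : ℝ | GS (Ustar ω) θ = s₀}) ≤ (θ₀ : EReal)}).toReal
        = 1 - L := by
  -- measurability of slices
  have hGc : ∀ c : ℝ, Measurable (fun u : M => GS u c) := fun c =>
    hGS.comp (measurable_id.prodMk measurable_const)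
  -- the key pointwise equivalence
  have hset : ∀ u : M, (sSup (Real.toEReal '' {θ : ℝ | GS u θ = s₀}) ≤ (θ₀ : EReal)) ↔
      ∀ n : ℕ, s₀ < GS u (θ₀ + 1 / ((n : ℝ) + 1)) := by
    intro u
    rw [sSup_le_iff]
    constructor
    · intro h n
      obtain ⟨θ₁, hθ₁⟩ := hne u
      have hle : θ₁ ≤ θ₀ := by
        have := h (θ₁ : EReal) ⟨θ₁, hθ₁, rfl⟩
        exact_mod_cast this
      have hpos : (0:ℝ) < 1 / ((n : ℝ) + 1) := by positivity
      have h1 : s₀ ≤ GS u (θ₀ + 1 / ((n : ℝ) + 1)) := by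
        calc s₀ = GS u θ₁ := hθ₁.symm
          _ ≤ _ := hmono u (by linarith)
      rcases h1.lt_or_eq with h2 | h2
      · exact h2
      · exfalso
        have h3 := h ((θ₀ + 1 / ((n : ℝ) + 1) : ℝ) : EReal) ⟨_, h2.symm, rfl⟩
        have h4 : θ₀ + 1 / ((n : ℝ) + 1) ≤ θ₀ := by exact_mod_cast h3
        linarith
    · intro h x hx
      obtain ⟨θ, hθ, rfl⟩ := hx
      rw [EReal.coe_le_coe_iff]
      by_contra hlt
      push_neg at hlt
      obtain ⟨n, hn⟩ := exists_nat_one_div_lt (show 0 < θ - θ₀ by linarith)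
      have h1 : GS u (θ₀ + 1 / ((n : ℝ) + 1)) ≤ GS u θ := hmono u (by linarith)
      have h2 := h n
      have : GS u θ = s₀ := hθ
      linarith
  -- the set equality
  have hEq : {ω : Ω | sSup (Real.toEReal '' {θ : ℝ | GS (Ustar ω) θ = s₀}) ≤ (θ₀ : EReal)} =
      ⋂ n : ℕ, {ω : Ω | s₀ < GS (Ustar ω) (θ₀ + 1 / ((n : ℝ) + 1))} := by
    ext ω
    simp only [mem_iInter, mem_setOf_eq]
    exact hset (Ustar ω)
  -- measurability
  have hAm : ∀ c : ℝ, MeasurableSet {ω : Ω | s₀ < GS (Ustar ω) c} := fun c =>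
    hUstar (measurableSet_lt measurable_const (hGc c))
  have hMeas :
      MeasurableSet {ω : Ω | sSup (Real.toEReal '' {θ : ℝ | GS (Ustar ω) θ = s₀}) ≤ (θ₀ : EReal)} := by
    rw [hEq]
    exact MeasurableSet.iInter fun n => hAm _
  -- antitonicity of F
  have hanti : Antitone (fun θ : ℝ => (P {ω : Ω | GS (U ω) θ ≤ s₀}).toReal) := by
    intro a b hab
    refine ENNReal.toReal_mono (measure_ne_top P _) (measure_mono ?_)
    intro ω hω
    exact le_trans (hmono (U ω) hab) hω
  refine ⟨hMeas, hEq, hanti, ?_⟩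
  -- the limit
  set g : ℝ → ℝ := fun ε => (P {ω : Ω | GS (U ω) (θ₀ + ε) ≤ s₀}).toReal with hg
  have hganti : Antitone g := fun a b hab => hanti (by linarith)
  set L : ℝ := sSup (g '' Ioi 0) with hL
  have hgt : Tendsto g (𝓝[>] (0:ℝ)) (𝓝 L) := hganti.tendsto_nhdsGT 0
  refine ⟨L, hgt, ?_⟩
  -- transfer measures from Ustar to U
  have hPU : ∀ c : ℝ, P {ω | GS (Ustar ω) c ≤ s₀} = P {ω | GS (U ω) c ≤ s₀} := by
    intro c
    have hS : MeasurableSet {u : M | GS u c ≤ s₀} := measurableSet_le (hGc c) measurable_const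
    have h1 : {ω | GS (Ustar ω) c ≤ s₀} = Ustar ⁻¹' {u | GS u c ≤ s₀} := rfl
    have h2 : {ω | GS (U ω) c ≤ s₀} = U ⁻¹' {u | GS u c ≤ s₀} := rfl
    rw [h1, h2, ← Measure.map_apply hUstar hS, ← Measure.map_apply hU hS, hdist]
  -- the decreasing family
  set A : ℕ → Set Ω := fun n => {ω : Ω | s₀ < GS (Ustar ω) (θ₀ + 1 / ((n : ℝ) + 1))} with hA
  have hAanti : Antitone A := by
    intro m n hmn ω hω
    have h1 : (1 : ℝ) / ((n : ℝ) + 1) ≤ 1 / ((m : ℝ) + 1) := by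
      apply one_div_le_one_div_of_le
      · positivity
      · exact_mod_cast by omega
    have := hmono (Ustar ω) (show θ₀ + 1 / ((n : ℝ) + 1) ≤ θ₀ + 1 / ((m : ℝ) + 1) by linarith)
    exact lt_of_lt_of_le hω this
  have hT : Tendsto (fun n => P (A n)) atTop (𝓝 (P (⋂ n, A n))) :=
    tendsto_measure_iInter_atTop (fun n => (hAm _).nullMeasurableSet) hAanti
      ⟨0, measure_ne_top P _⟩
  have hT' : Tendsto (fun n => (P (A n)).toReal) atTop (𝓝 ((P (⋂ n, A n)).toReal)) :=
    (ENNReal.tendsto_toReal (measure_ne_top P _)).comp hT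
  -- compute P (A n)
  have hPA : ∀ n : ℕ, (P (A n)).toReal = 1 - g (1 / ((n : ℝ) + 1)) := by
    intro n
    set c : ℝ := θ₀ + 1 / ((n : ℝ) + 1) with hc
    have hcompl : A n = {ω : Ω | GS (Ustar ω) c ≤ s₀}ᶜ := by
      ext ω
      simp [hA, hc, not_le]
    have hm : MeasurableSet {ω : Ω | GS (Ustar ω) c ≤ s₀} :=
      hUstar (measurableSet_le (hGc c) measurable_const)
    rw [hcompl, prob_compl_eq_one_sub hm, hPU c,
      ENNReal.toReal_sub_of_le prob_le_one ENNReal.one_ne_top, ENNReal.toReal_one]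
  -- the sequence 1/(n+1) tends to 0 within Ioi 0
  have hseq : Tendsto (fun n : ℕ => 1 / ((n : ℝ) + 1)) atTop (𝓝[>] (0:ℝ)) := by
    apply tendsto_nhdsWithin_of_tendsto_nhds_of_eventually_within
    · exact tendsto_one_div_add_atTop_nhds_zero_nat
    · filter_upwards with n
      have : (0:ℝ) < 1 / ((n : ℝ) + 1) := by positivity
      exact this
  have hT2 : Tendsto (fun n => (P (A n)).toReal) atTop (𝓝 (1 - L)) := by
    have := (hgt.comp hseq).const_sub 1
    simpa [hPA] using this
  have := tendsto_nhds_unique hT' hT2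
  rw [hEq]
  exact this
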